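/- Under the QND assumption and the distinguishability assumption, if a density matrix ρ ∈ D satisfies Q(ρ) = 0, then ρ is one of the d projectors onto basis states: there exists n ∈ {1,…,d} such that ρ = |n⟩⟨n|. -/

import Mathlib

open Matrix BigOperators
open scoped ComplexOrder

/-- `p_{μ,ρ} = tr(M_μ ρ M_μ†)` (a real number since `ρ` is positive semidefinite). -/
noncomputable def pMeas {d m : ℕ} (M : Fin m → Matrix (Fin d) (Fin d) ℂ)
    (ρ : Matrix (Fin d) (Fin d) ℂ) (μ : Fin m) : ℝ :=
  ((M μ * ρ * (M μ)ᴴ).trace).re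

/-- `Q(ρ) = (1/4) Σ_n Σ_{μ,ν} q_{μ,ν,n}(ρ)`. -/
noncomputable def Qfun {d m : ℕ} (M : Fin m → Matrix (Fin d) (Fin d) ℂ)
    (c : Fin m → Fin d → ℂ) (ρ : Matrix (Fin d) (Fin d) ℂ) : ℝ :=
  (1 / 4) * ∑ n, ∑ μ, ∑ ν,
    if 0 < pMeas M ρ μ * pMeas M ρ ν then
      pMeas M ρ μ * pMeas M ρ ν *
        (Complex.normSq (c μ n) * (ρ n n).re / pMeas M ρ μ -
          Complex.normSq (c ν n) * (ρ n n).re / pMeas M ρ ν) ^ 2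
    else 0

/-- Under the QND assumption and the distinguishability assumption, if a
density matrix `ρ` satisfies `Q(ρ) = 0` then `ρ = |n⟩⟨n|` for some basis index `n`. -/
theorem stmt_4 (d m : ℕ) (hd : 1 ≤ d) (hm : 1 ≤ m)
    (M : Fin m → Matrix (Fin d) (Fin d) ℂ) (c : Fin m → Fin d → ℂ)
    (hQND : ∀ μ, M μ = Matrix.diagonal (c μ))
    (hKraus : ∑ μ, (M μ)ᴴ * M μ = 1)
    (hdist : ∀ n₁ n₂ : Fin d, n₁ ≠ n₂ →
      ∃ μ, Complex.normSq (c μ n₁) ≠ Complex.normSq (c μ n₂))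
    (ρ : Matrix (Fin d) (Fin d) ℂ)
    (hρ : ρ.PosSemidef ∧ ρ.trace = 1)
    (hQ : Qfun M c ρ = 0) :
    ∃ n : Fin d, ρ = Matrix.single n n 1 := by
  classical
  obtain ⟨hPSD, htr⟩ := hρ
  obtain ⟨B, hB⟩ : ∃ B : Matrix (Fin d) (Fin d) ℂ, ρ = Bᴴ * B := by
    open MatrixOrder in exact CStarAlgebra.nonneg_iff_eq_star_mul_self.mp hPSD.nonneg
  set r : Fin d → ℝ := fun n => (ρ n n).re with hrdef
  set p : Fin m → ℝ := fun μ => pMeas M ρ μ with hpdef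
  have hentry : ∀ i j, ρ i j = ∑ k, star (B k i) * B k j := by
    intro i j
    rw [hB]
    simp [Matrix.mul_apply, Matrix.conjTranspose_apply]
  have hdiag : ∀ n, ρ n n = ((∑ k, Complex.normSq (B k n) : ℝ) : ℂ) := by
    intro n
    rw [hentry]
    push_cast
    exact Finset.sum_congr rfl fun k _ => by
      rw [Complex.normSq_eq_conj_mul_self]; rfl
  have hrnn : ∀ n, r n = ∑ k, Complex.normSq (B k n) := by
    intro n
    simp [hrdef, hdiag n]
  have hr0 : ∀ n, 0 ≤ r n := by
    intro n
    rw [hrnn]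
    exact Finset.sum_nonneg fun k _ => Complex.normSq_nonneg _
  have hBzero : ∀ i, r i = 0 → ∀ k, B k i = 0 := by
    intro i hi k
    rw [hrnn i] at hi
    have := (Finset.sum_eq_zero_iff_of_nonneg
      (fun k _ => Complex.normSq_nonneg (B k i))).mp hi k (Finset.mem_univ k)
    exact Complex.normSq_eq_zero.mp this
  have hrsum : ∑ n, r n = 1 := by
    have : (ρ.trace).re = 1 := by rw [htr]; simp
    rw [← this]
    simp [Matrix.trace, hrdef, Complex.re_sum, Matrix.diag]
  have hpM : ∀ μ, p μ = ∑ n, Complex.normSq (c μ n) * r n := by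
    intro μ
    show ((M μ * ρ * (M μ)ᴴ).trace).re = ∑ n, Complex.normSq (c μ n) * r n
    rw [hQND μ, Matrix.diagonal_conjTranspose]
    have htrace : (Matrix.diagonal (c μ) * ρ * Matrix.diagonal (star (c μ))).trace
        = ∑ n, ((Complex.normSq (c μ n) : ℂ) * ρ n n) := by
      simp only [Matrix.trace, Matrix.diag, Matrix.mul_diagonal, Matrix.diagonal_mul]
      exact Finset.sum_congr rfl fun n _ => by
        rw [Complex.normSq_eq_conj_mul_self]; ring_nf; rfl
    rw [htrace, Complex.re_sum]
    exact Finset.sum_congr rfl fun n _ => by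
      simp [Complex.re_ofReal_mul, hrdef]
  have hK : ∀ n, ∑ μ, Complex.normSq (c μ n) = 1 := by
    intro n
    have h1 : (∑ μ, (M μ)ᴴ * M μ) n n = 1 := by
      rw [hKraus, Matrix.one_apply_eq]
    have h2 : (∑ μ, ((Complex.normSq (c μ n) : ℂ))) = 1 := by
      rw [← h1]
      simp only [Matrix.sum_apply]
      exact (Finset.sum_congr rfl fun μ _ => by
        rw [hQND, Matrix.diagonal_conjTranspose, Matrix.diagonal_mul_diagonal,
          Matrix.diagonal_apply_eq, Complex.normSq_eq_conj_mul_self]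
        rfl).symm
    exact_mod_cast h2
  have hp0 : ∀ μ, 0 ≤ p μ := by
    intro μ
    rw [hpM]
    exact Finset.sum_nonneg fun n _ => mul_nonneg (Complex.normSq_nonneg _) (hr0 n)
  have hpsum : ∑ μ, p μ = 1 := by
    simp only [hpM]
    rw [Finset.sum_comm]
    calc ∑ n, ∑ μ, Complex.normSq (c μ n) * r n
        = ∑ n, (∑ μ, Complex.normSq (c μ n)) * r n := by
          exact Finset.sum_congr rfl fun n _ => (Finset.sum_mul ..).symm
      _ = ∑ n, r n := by
          exact Finset.sum_congr rfl fun n _ => by rw [hK n, one_mul]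
      _ = 1 := hrsum
  -- all Q summands vanish
  have hterm : ∀ n μ ν, 0 < p μ → 0 < p ν →
      Complex.normSq (c μ n) * r n / p μ = Complex.normSq (c ν n) * r n / p ν := by
    have hS : ∑ n, ∑ μ, ∑ ν,
        (if 0 < pMeas M ρ μ * pMeas M ρ ν then
          pMeas M ρ μ * pMeas M ρ ν *
            (Complex.normSq (c μ n) * (ρ n n).re / pMeas M ρ μ -
              Complex.normSq (c ν n) * (ρ n n).re / pMeas M ρ ν) ^ 2
        else 0) = 0 := by
      have := hQ
      unfold Qfun at this
      linarith
    have hnn : ∀ n μ ν, (0:ℝ) ≤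
        (if 0 < pMeas M ρ μ * pMeas M ρ ν then
          pMeas M ρ μ * pMeas M ρ ν *
            (Complex.normSq (c μ n) * (ρ n n).re / pMeas M ρ μ -
              Complex.normSq (c ν n) * (ρ n n).re / pMeas M ρ ν) ^ 2
        else 0) := by
      intro n μ ν
      split
      · exact mul_nonneg (by assumption : (0:ℝ) < _).le (sq_nonneg _)
      · exact le_refl 0
    intro n μ ν hμ hν
    have h1 := (Finset.sum_eq_zero_iff_of_nonneg
      (fun n _ => Finset.sum_nonneg fun μ _ => Finset.sum_nonneg fun ν _ => hnn n μ ν)).mp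
      hS n (Finset.mem_univ n)
    have h2 := (Finset.sum_eq_zero_iff_of_nonneg
      (fun μ _ => Finset.sum_nonneg fun ν _ => hnn n μ ν)).mp h1 μ (Finset.mem_univ μ)
    have h3 := (Finset.sum_eq_zero_iff_of_nonneg
      (fun ν _ => hnn n μ ν)).mp h2 ν (Finset.mem_univ ν)
    have hpos : 0 < pMeas M ρ μ * pMeas M ρ ν := mul_pos hμ hν
    rw [if_pos hpos] at h3
    have hsq : (Complex.normSq (c μ n) * (ρ n n).re / pMeas M ρ μ -
        Complex.normSq (c ν n) * (ρ n n).re / pMeas M ρ ν) ^ 2 = 0 := by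
      rcases mul_eq_zero.mp h3 with h | h
      · exact absurd h hpos.ne'
      · exact h
    have := pow_eq_zero_iff (n := 2) (by norm_num) |>.mp hsq
    have : Complex.normSq (c μ n) * (ρ n n).re / pMeas M ρ μ =
        Complex.normSq (c ν n) * (ρ n n).re / pMeas M ρ ν := by linarith
    exact this
  -- key: for n with positive population, |c μ n|² = p μ
  have hC : ∀ n, 0 < r n → ∀ μ, Complex.normSq (c μ n) = p μ := by
    intro n hn
    have hzero : ∀ μ, p μ = 0 → Complex.normSq (c μ n) = 0 := by
      intro μ hμ
      rw [hpM μ] at hμ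
      have := (Finset.sum_eq_zero_iff_of_nonneg
        (fun k _ => mul_nonneg (Complex.normSq_nonneg _) (hr0 k))).mp hμ n (Finset.mem_univ n)
      rcases mul_eq_zero.mp this with h | h
      · exact h
      · exact absurd h hn.ne'
    intro μ
    rcases eq_or_lt_of_le (hp0 μ) with hμ | hμ
    · rw [hzero μ hμ.symm, ← hμ]
    · have hrel : ∀ ν, Complex.normSq (c μ n) * p ν = Complex.normSq (c ν n) * p μ := by
        intro ν
        rcases eq_or_lt_of_le (hp0 ν) with hν | hν
        · rw [← hν, hzero ν hν.symm]; ring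
        · have h := hterm n μ ν hμ hν
          have h2 : Complex.normSq (c μ n) * r n * p ν = Complex.normSq (c ν n) * r n * p μ := by
            field_simp at h
            linear_combination r n * h
          have h3 : r n * (Complex.normSq (c μ n) * p ν) = r n * (Complex.normSq (c ν n) * p μ) := by
            ring_nf
            ring_nf at h2
            linarith
          exact mul_left_cancel₀ hn.ne' h3
      have := Finset.sum_congr rfl fun ν (_ : ν ∈ Finset.univ) => hrel ν
      rw [← Finset.mul_sum, hpsum, mul_one, ← Finset.sum_mul, hK n, one_mul] at this
      exact this
  -- exactly one positive population
  have hex : ∃ n, 0 < r n := by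
    by_contra h
    push_neg at h
    have : ∀ n, r n = 0 := fun n => le_antisymm (h n) (hr0 n)
    rw [Finset.sum_congr rfl fun n _ => this n] at hrsum
    simp at hrsum
  obtain ⟨n, hn⟩ := hex
  have huniq : ∀ n', n' ≠ n → r n' = 0 := by
    intro n' hne
    by_contra h
    have hn' : 0 < r n' := lt_of_le_of_ne (hr0 n') (Ne.symm h)
    obtain ⟨μ, hμ⟩ := hdist n n' (Ne.symm hne)
    exact hμ ((hC n hn μ).trans (hC n' hn' μ).symm)
  have hrn1 : r n = 1 := by
    rw [← hrsum]
    rw [Finset.sum_eq_single n (fun b _ hb => huniq b hb) (fun h => absurd (Finset.mem_univ n) h)]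
  refine ⟨n, ?_⟩
  ext i j
  by_cases hi : i = n
  · by_cases hj : j = n
    · rw [hi, hj, hdiag n, ← hrnn n, hrn1]
      simp [Matrix.single]
    · have hz : ∀ k, B k j = 0 := hBzero j (huniq j hj)
      have hnj : ¬ (n = i ∧ n = j) := fun h => hj h.2.symm
      rw [hentry]
      simp [hz, Matrix.single, hnj]
  · have hz : ∀ k, B k i = 0 := hBzero i (huniq i hi)
    have hni : ¬ (n = i ∧ n = j) := fun h => hi h.1.symm
    rw [hentry]
    simp [hz, Matrix.single, hni]
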